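/- For any two integers M ≥ 3 and M' ≥ 3, constants C0 > 0 and γ̃ > 0, the infimum over time-allocation vectors η in the unit simplex of dimension M and azimuth angle vectors φ ∈ ℝ^M (with positive denominator) of CRLB(η, φ) = C0·(Σ_{m=1}^M η_m γ̃)/(Σ_{1≤j<i≤M} η_j γ̃ · η_i γ̃ · sin²(φ_i − φ_j)) equals the corresponding infimum with M replaced by M'; both infima equal 4C0/γ̃ and are attained. In particular, the optimal single-target localization performance under flexible base-station deployment is independent of the number of base stations. -/

import Mathlib

open Real Finset

/-- Denominator of the equal-SNR single-target localization CRLB. -/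
noncomputable def crlbDen (M : ℕ) (γ : ℝ) (η φ : Fin M → ℝ) : ℝ :=
  ∑ i : Fin M, ∑ j ∈ Finset.Iio i, (η j * γ) * (η i * γ) * sin (φ i - φ j) ^ 2

/-- The set of CRLB values achievable with `M` base stations, over all time allocations
`η` in the unit simplex and all azimuth vectors `φ` with positive denominator. -/
noncomputable def crlbSet (M : ℕ) (C0 γ : ℝ) : Set ℝ :=
  {v | ∃ η φ : Fin M → ℝ, (∀ m, 0 ≤ η m) ∧ (∑ m, η m) = 1 ∧ 0 < crlbDen M γ η φ ∧
        v = C0 * (∑ m, η m * γ) / crlbDen M γ η φ}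

/-- triangle reindexing -/
lemma tri_swap (M : ℕ) (g : Fin M → Fin M → ℝ) :
    ∑ i : Fin M, ∑ j ∈ Finset.Ioi i, g i j = ∑ j : Fin M, ∑ i ∈ Finset.Iio j, g i j := by
  exact Finset.sum_comm' (by intro i j; simp [and_comm])

/-- Key algebraic identity for the CRLB denominator. -/
lemma crlbDen_eq (M : ℕ) (γ : ℝ) (η φ : Fin M → ℝ) :
    crlbDen M γ η φ = γ ^ 2 *
      ((∑ i, η i) ^ 2 - (∑ i, η i * Real.cos (2 * φ i)) ^ 2
        - (∑ i, η i * Real.sin (2 * φ i)) ^ 2) / 4 := by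
  set g : Fin M → Fin M → ℝ := fun i j => η i * η j * Real.sin (φ i - φ j) ^ 2 with hg
  have hsym : ∀ i j, g i j = g j i := by
    intro i j
    have : Real.sin (φ j - φ i) = - Real.sin (φ i - φ j) := by
      rw [← Real.sin_neg]; ring_nf
    simp only [hg, this]; ring
  have hdiag : ∀ i, g i i = 0 := by intro i; simp [hg]
  -- full double sum equals twice the triangular sum
  have hsplit : ∀ i : Fin M, (Finset.univ : Finset (Fin M)) =
      Finset.Iio i ∪ Finset.Ici i := by
    intro i; ext j; simp [Finset.mem_Iio, Finset.mem_Ici, lt_or_ge]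
  have hfull : ∑ i : Fin M, ∑ j : Fin M, g i j
      = 2 * ∑ i : Fin M, ∑ j ∈ Finset.Iio i, g i j := by
    have h1 : ∀ i : Fin M, ∑ j : Fin M, g i j
        = ∑ j ∈ Finset.Iio i, g i j + ∑ j ∈ Finset.Ioi i, g i j := by
      intro i
      have hU : (Finset.univ : Finset (Fin M)) = Finset.Iio i ∪ insert i (Finset.Ioi i) := by
        ext j
        simp only [Finset.mem_univ, Finset.mem_union, Finset.mem_insert, Finset.mem_Iio,
          Finset.mem_Ioi, true_iff, Fin.lt_def, Fin.ext_iff]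
        omega
      have hdisj : Disjoint (Finset.Iio i) (insert i (Finset.Ioi i)) := by
        simp only [Finset.disjoint_left, Finset.mem_Iio, Finset.mem_insert, Finset.mem_Ioi,
          Fin.lt_def, Fin.ext_iff]
        intro x hx
        omega
      rw [hU, Finset.sum_union hdisj, Finset.sum_insert (by simp), hdiag i, zero_add]
    simp_rw [h1, Finset.sum_add_distrib]
    have h2 : ∑ i : Fin M, ∑ j ∈ Finset.Ioi i, g i j
        = ∑ i : Fin M, ∑ j ∈ Finset.Iio i, g i j := by
      rw [tri_swap M g]
      apply Finset.sum_congr rfl; intro j _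
      apply Finset.sum_congr rfl; intro i _
      exact (hsym j i).symm
    rw [h2]; ring
  -- compute the full double sum
  have hterm : ∀ i j : Fin M, 2 * g i j
      = η i * η j - (η i * Real.cos (2 * φ i)) * (η j * Real.cos (2 * φ j))
        - (η i * Real.sin (2 * φ i)) * (η j * Real.sin (2 * φ j)) := by
    intro i j
    have hc : Real.cos (2 * φ i - 2 * φ j)
        = Real.cos (2 * φ i) * Real.cos (2 * φ j)
          + Real.sin (2 * φ i) * Real.sin (2 * φ j) := Real.cos_sub _ _
    have h2s : Real.cos (2 * (φ i - φ j)) = 1 - 2 * Real.sin (φ i - φ j) ^ 2 := by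
      rw [Real.cos_two_mul]
      have := Real.sin_sq_add_cos_sq (φ i - φ j)
      nlinarith
    have h3 : (2 : ℝ) * (φ i - φ j) = 2 * φ i - 2 * φ j := by ring
    rw [h3] at h2s
    have key : Real.cos (2 * φ i) * Real.cos (2 * φ j)
        + Real.sin (2 * φ i) * Real.sin (2 * φ j)
        = 1 - 2 * Real.sin (φ i - φ j) ^ 2 := by linarith [hc, h2s]
    simp only [hg]
    linear_combination η i * η j * key
  have hexp : ∑ i : Fin M, ∑ j : Fin M, g i j
      = ((∑ i, η i) ^ 2 - (∑ i, η i * Real.cos (2 * φ i)) ^ 2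
        - (∑ i, η i * Real.sin (2 * φ i)) ^ 2) / 2 := by
    have e1 : (∑ i, η i) ^ 2 = ∑ i : Fin M, ∑ j : Fin M, η i * η j := by
      rw [sq, Finset.sum_mul_sum]
    have e2 : (∑ i, η i * Real.cos (2 * φ i)) ^ 2
        = ∑ i : Fin M, ∑ j : Fin M, (η i * Real.cos (2 * φ i)) * (η j * Real.cos (2 * φ j)) := by
      rw [sq, Finset.sum_mul_sum]
    have e3 : (∑ i, η i * Real.sin (2 * φ i)) ^ 2
        = ∑ i : Fin M, ∑ j : Fin M, (η i * Real.sin (2 * φ i)) * (η j * Real.sin (2 * φ j)) := by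
      rw [sq, Finset.sum_mul_sum]
    rw [e1, e2, e3]
    rw [eq_div_iff (by norm_num : (2:ℝ) ≠ 0)]
    rw [← Finset.sum_sub_distrib, ← Finset.sum_sub_distrib, Finset.sum_mul]
    apply Finset.sum_congr rfl; intro i _
    rw [← Finset.sum_sub_distrib, ← Finset.sum_sub_distrib, Finset.sum_mul]
    apply Finset.sum_congr rfl; intro j _
    rw [mul_comm]; exact hterm i j
  have hden : crlbDen M γ η φ = γ ^ 2 * ∑ i : Fin M, ∑ j ∈ Finset.Iio i, g i j := by
    unfold crlbDen
    rw [Finset.mul_sum]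
    apply Finset.sum_congr rfl; intro i _
    rw [Finset.mul_sum]
    apply Finset.sum_congr rfl; intro j _
    simp only [hg]; ring
  rw [hden]
  have := hfull.symm.trans hexp
  nlinarith [this]

lemma crlb_isLeast (C0 γ : ℝ) (hC0 : 0 < C0) (hγ : 0 < γ) (M : ℕ) (hM : 3 ≤ M) :
    IsLeast (crlbSet M C0 γ) (4 * C0 / γ) := by
  constructor
  · -- attained at η = (1/2,1/2,0,...), φ = (0, π/2, 0, ...)
    have h0 : 0 < M := by omega
    have h1 : 1 < M := by omega
    set a : Fin M := ⟨0, h0⟩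
    set b : Fin M := ⟨1, h1⟩
    have hab : a ≠ b := by simp [a, b, Fin.ext_iff]
    set η : Fin M → ℝ := fun m => if m = a then 1/2 else if m = b then 1/2 else 0 with hη
    set φ : Fin M → ℝ := fun m => if m = b then Real.pi / 2 else 0 with hφ
    have hsum : ∀ (x y : ℝ) (f : Fin M → ℝ),
        (∀ m, f m = if m = a then x else if m = b then y else 0) →
        ∑ m, f m = x + y := by
      intro x y f hf
      have : ∀ m, f m = (if m = a then x else 0) + (if m = b then y else 0) := by
        intro m
        rw [hf m]
        by_cases h1 : m = a
        · subst h1; simp [hab]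
        · by_cases h2 : m = b <;> simp [h1, h2, Ne.symm hab]
      rw [Finset.sum_congr rfl (fun m _ => this m), Finset.sum_add_distrib]
      simp
    have hsum1 : ∑ m, η m = 1 := by
      rw [hsum (1/2) (1/2) η (fun m => rfl)]; norm_num
    have hcos : ∑ i, η i * Real.cos (2 * φ i) = 0 := by
      rw [hsum (1/2) (-(1/2)) _ ?_]
      · norm_num
      · intro m
        by_cases h1 : m = a
        · subst h1; simp [hη, hφ, hab]
        · by_cases h2 : m = b
          · subst h2
            simp only [hη, hφ, if_neg h1, if_pos rfl]
            rw [show (2 : ℝ) * (Real.pi / 2) = Real.pi by ring, Real.cos_pi]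
            norm_num
          · simp [hη, h1, h2]
    have hsin : ∑ i, η i * Real.sin (2 * φ i) = 0 := by
      rw [hsum 0 0 _ ?_]
      · norm_num
      · intro m
        by_cases h1 : m = a
        · subst h1; simp [hη, hφ, hab]
        · by_cases h2 : m = b
          · subst h2
            simp only [hη, hφ, if_neg h1, if_pos rfl]
            rw [show (2 : ℝ) * (Real.pi / 2) = Real.pi by ring, Real.sin_pi]
            norm_num
          · simp [hη, h1, h2]
    have hden : crlbDen M γ η φ = γ ^ 2 / 4 := by
      rw [crlbDen_eq, hsum1, hcos, hsin]; ring
    have hdpos : 0 < crlbDen M γ η φ := by rw [hden]; positivity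
    refine ⟨η, φ, ?_, hsum1, hdpos, ?_⟩
    · intro m
      simp only [hη]
      by_cases h1 : m = a
      · simp [h1]
      · by_cases h2 : m = b <;> simp [h1, h2] <;> norm_num
    · rw [hden, ← Finset.sum_mul, hsum1]
      field_simp
  · rintro v ⟨η, φ, hpos, hsum1, hdpos, rfl⟩
    have hnum : ∑ m, η m * γ = γ := by rw [← Finset.sum_mul, hsum1, one_mul]
    rw [hnum]
    -- need: 4*C0/γ ≤ C0*γ / D, i.e. D ≤ γ²/4
    have hD : crlbDen M γ η φ ≤ γ ^ 2 / 4 := by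
      rw [crlbDen_eq, hsum1]
      have h1 : (0:ℝ) ≤ (∑ i, η i * Real.cos (2 * φ i)) ^ 2 := sq_nonneg _
      have h2 : (0:ℝ) ≤ (∑ i, η i * Real.sin (2 * φ i)) ^ 2 := sq_nonneg _
      nlinarith [sq_nonneg γ]
    rw [div_le_div_iff₀ hγ hdpos]
    nlinarith
  
theorem crlb_infimum_independent_of_M (C0 γ : ℝ) (hC0 : 0 < C0) (hγ : 0 < γ)
    (M M' : ℕ) (hM : 3 ≤ M) (hM' : 3 ≤ M') :
    IsLeast (crlbSet M C0 γ) (4 * C0 / γ)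
    ∧ IsLeast (crlbSet M' C0 γ) (4 * C0 / γ)
    ∧ sInf (crlbSet M C0 γ) = sInf (crlbSet M' C0 γ)
    ∧ sInf (crlbSet M C0 γ) = 4 * C0 / γ := by
  have hL := crlb_isLeast C0 γ hC0 hγ M hM
  have hL' := crlb_isLeast C0 γ hC0 hγ M' hM'
  have e1 := hL.csInf_eq
  have e2 := hL'.csInf_eq
  exact ⟨hL, hL', by rw [e1, e2], e1⟩
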